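/- Let G be a connected chordal bipartite graph and r a vertex of G. Let x and y be two vertices at distance i from r. If there is a vertex z at distance i+1 from r adjacent to both x and y, then N(x) ∩ N^{i-1}(r) ⊆ N(y) or N(y) ∩ N^{i-1}(r) ⊆ N(x). -/

import Mathlib

/-- A cycle is induced if the only edges of `G` between its vertices are its own edges. -/
def IsInducedCycle {V : Type*} (G : SimpleGraph V) {v : V} (c : G.Walk v v) : Prop :=
  c.IsCycle ∧ ∀ x ∈ c.support, ∀ y ∈ c.support, G.Adj x y → s(x, y) ∈ c.edges

namespace ChordalBipAux

open SimpleGraph Walk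

variable {V : Type*} {G : SimpleGraph V}

lemma color_parity (f : V → Bool) (hf : ∀ u v : V, G.Adj u v → f u ≠ f v) :
    ∀ {u v : V} (p : G.Walk u v), (f u = f v) ↔ Even p.length := by
  intro u v p
  induction p with
  | nil => simp
  | @cons u w v h p ih =>
    have h1 : f u ≠ f w := hf _ _ h
    simp only [Walk.length_cons, Nat.even_add_one, ← ih]
    cases hu : f u <;> cases hw : f w <;> cases hv : f v <;> simp_all

lemma adj_dist_ne (hconn : G.Connected) (f : V → Bool)
    (hf : ∀ u v : V, G.Adj u v → f u ≠ f v) {r u v : V} (h : G.Adj u v) :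
    G.dist r u ≠ G.dist r v := by
  intro heq
  obtain ⟨p, hp⟩ := (hconn r u).exists_walk_length_eq_dist
  obtain ⟨q, hq⟩ := (hconn r v).exists_walk_length_eq_dist
  have h1 := color_parity f hf p
  have h2 := color_parity f hf q
  rw [hp] at h1
  rw [hq, ← heq] at h2
  have h3 : f u = f v := by
    cases hr : f r <;> cases hu : f u <;> cases hv : f v <;>
      simp_all [Nat.even_iff, Nat.odd_iff]
  exact hf u v h h3

lemma adj_dist_le (hconn : G.Connected) {r u v : V} (h : G.Adj u v) :
    G.dist r v ≤ G.dist r u + 1 := by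
  obtain ⟨p, hp⟩ := (hconn r u).exists_walk_length_eq_dist
  have := SimpleGraph.dist_le (p.concat h)
  rwa [Walk.length_concat, hp] at this

lemma dist_lt_of_mem_support {r a : V} (p : G.Walk r a) (hp : p.length = G.dist r a)
    {w : V} (hw : w ∈ p.support) (hwa : w ≠ a) : G.dist r w < G.dist r a := by
  obtain ⟨q1, q2, rfl⟩ := Walk.mem_support_iff_exists_append.mp hw
  have h1 : G.dist r w ≤ q1.length := SimpleGraph.dist_le q1
  have h2 : q2.length ≠ 0 := fun h0 => hwa (Walk.eq_of_length_eq_zero h0)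
  rw [Walk.length_append] at hp
  omega

lemma edge_mem_of_length_one {u v : V} (p : G.Walk u v) (hp : p.length = 1) :
    s(u, v) ∈ p.edges := by
  cases p with
  | nil => simp at hp
  | @cons _ w _ h q =>
    have hq : q.length = 0 := by simpa using hp
    have : w = v := Walk.eq_of_length_eq_zero hq
    subst this
    simp

lemma exists_chordless_path {u v : V} (pred : V → Prop) (p0 : G.Walk u v)
    (h0 : ∀ w ∈ p0.support, pred w) :
    ∃ q : G.Walk u v, q.IsPath ∧ (∀ w ∈ q.support, pred w) ∧
      ∀ c d, c ∈ q.support → d ∈ q.support → G.Adj c d → s(c, d) ∈ q.edges := by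
  classical
  have hex : ∃ n, ∃ p : G.Walk u v, p.length = n ∧ ∀ w ∈ p.support, pred w :=
    ⟨p0.length, p0, rfl, h0⟩
  obtain ⟨p, hplen, hpsup⟩ := Nat.find_spec hex
  set q := p.bypass with hqdef
  have hqsup : ∀ w ∈ q.support, pred w := fun w hw => hpsup w (p.support_bypass_subset hw)
  have hqlen : q.length = Nat.find hex := by
    have h1 : q.length ≤ Nat.find hex := hplen ▸ p.length_bypass_le
    have h2 : Nat.find hex ≤ q.length := Nat.find_min' hex ⟨q, rfl, hqsup⟩
    omega
  refine ⟨q, p.bypass_isPath, hqsup, ?_⟩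
  have key : ∀ (c d : V) (q1 : G.Walk u c) (q2 : G.Walk c v),
      q = q1.append q2 → d ∈ q2.support → G.Adj c d → s(c, d) ∈ q.edges := by
    intro c d q1 q2 heq hd hadj
    obtain ⟨q3, q4, rfl⟩ := Walk.mem_support_iff_exists_append.mp hd
    rcases Nat.lt_or_ge q3.length 2 with hlt | hge
    · interval_cases h3 : q3.length
      · exact absurd (Walk.eq_of_length_eq_zero h3) hadj.ne
      · have : s(c, d) ∈ q3.edges := edge_mem_of_length_one q3 h3
        rw [heq, Walk.edges_append, Walk.edges_append]
        simp only [List.mem_append]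
        exact Or.inr (Or.inl this)
    · exfalso
      set w' : G.Walk u v := q1.append (Walk.cons hadj q4) with hw'
      have hw'len : w'.length < Nat.find hex := by
        have e1 : q.length = q1.length + (q3.length + q4.length) := by
          rw [heq, Walk.length_append, Walk.length_append]
        have e2 : w'.length = q1.length + (q4.length + 1) := by
          rw [hw', Walk.length_append, Walk.length_cons]
        omega
      have hw'sup : ∀ w ∈ w'.support, pred w := by
        intro w hw
        rw [hw', Walk.mem_support_append_iff] at hw
        apply hqsup
        rw [heq, Walk.mem_support_append_iff]
        rcases hw with hw | hw
        · exact Or.inl hw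
        · right
          rw [Walk.mem_support_append_iff]
          rw [Walk.support_cons] at hw
          rcases List.mem_cons.mp hw with rfl | hw
          · exact Or.inl q3.start_mem_support
          · exact Or.inr hw
      exact Nat.find_min hex hw'len ⟨w', rfl, hw'sup⟩
  intro c d hc hd hadj
  obtain ⟨q1, q2, heq⟩ := Walk.mem_support_iff_exists_append.mp hc
  rw [heq, Walk.mem_support_append_iff] at hd
  rcases hd with hd | hd
  · -- d occurs in q1, before c
    obtain ⟨q3, q4, heq1⟩ := Walk.mem_support_iff_exists_append.mp hd
    have heq' : q = q3.append (q4.append q2) := by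
      rw [heq, heq1, Walk.append_assoc]
    have hc' : c ∈ (q4.append q2).support := by
      rw [Walk.mem_support_append_iff]
      exact Or.inl q4.end_mem_support
    have := key d c q3 (q4.append q2) heq' hc' hadj.symm
    rwa [Sym2.eq_swap] at this
  · exact key c d q1 q2 heq hd hadj

end ChordalBipAux

open SimpleGraph Walk ChordalBipAux in
/-- Let `G` be a connected chordal bipartite graph, `x, y` vertices at distance `i`
from `r`, and `z` a common neighbor of `x` and `y` at distance `i+1` from `r`. Then
`N(x) ∩ N^{i-1}(r) ⊆ N(y)` or `N(y) ∩ N^{i-1}(r) ⊆ N(x)`. -/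
theorem chordal_bipartite_nested_neighborhoods {V : Type*} (G : SimpleGraph V)
    (hconn : G.Connected)
    (hbip : ∃ f : V → Bool, ∀ u v : V, G.Adj u v → f u ≠ f v)
    (hcb : ∀ (v : V) (c : G.Walk v v), IsInducedCycle G c → c.length = 4)
    (r x y z : V) (i : ℕ)
    (hx : G.dist r x = i) (hy : G.dist r y = i) (hz : G.dist r z = i + 1)
    (hzx : G.Adj z x) (hzy : G.Adj z y) :
    (G.neighborSet x ∩ {w | G.dist r w = i - 1} ⊆ G.neighborSet y) ∨
    (G.neighborSet y ∩ {w | G.dist r w = i - 1} ⊆ G.neighborSet x) := by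
  classical
  obtain ⟨f, hf⟩ := hbip
  by_cases hxy : x = y
  · left; subst hxy; exact fun w hw => hw.1
  by_contra hcon
  push_neg at hcon
  obtain ⟨h1, h2⟩ := hcon
  obtain ⟨a, ⟨ha1, ha2⟩, hay⟩ := Set.not_subset.mp h1
  obtain ⟨b, ⟨hb1, hb2⟩, hbx⟩ := Set.not_subset.mp h2
  rw [SimpleGraph.mem_neighborSet] at ha1 hb1
  rw [SimpleGraph.mem_neighborSet] at hay hbx
  have ha2 : G.dist r a = i - 1 := ha2
  have hb2 : G.dist r b = i - 1 := hb2
  -- rule out i = 0 and i = 1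
  have hi : 2 ≤ i := by
    rcases Nat.lt_or_ge i 2 with h | h
    · exfalso
      interval_cases i
      · -- i = 0 : x = y = r
        have hxr : r = x := (hconn.dist_eq_zero_iff).mp hx
        have hyr : r = y := (hconn.dist_eq_zero_iff).mp hy
        exact hxy (hxr ▸ hyr)
      · -- i = 1 : a = b = r
        have har : r = a := (hconn.dist_eq_zero_iff).mp ha2
        have hbr : r = b := (hconn.dist_eq_zero_iff).mp hb2
        exact hay (har ▸ hbr ▸ hb1)
    · exact h
  have hxyne : x ≠ y := hxy
  -- build an initial walk from b to a through low levels
  obtain ⟨pa, hpa⟩ := (hconn r a).exists_walk_length_eq_dist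
  obtain ⟨pb, hpb⟩ := (hconn r b).exists_walk_length_eq_dist
  set pred : V → Prop := fun w => w = a ∨ w = b ∨ G.dist r w ≤ i - 2 with hpred
  have h0 : ∀ w ∈ (pb.reverse.append pa).support, pred w := by
    intro w hw
    rw [Walk.mem_support_append_iff] at hw
    rcases hw with hw | hw
    · rw [Walk.support_reverse, List.mem_reverse] at hw
      by_cases hwb : w = b
      · exact Or.inr (Or.inl hwb)
      · have := dist_lt_of_mem_support pb hpb hw hwb
        right; right; omega
    · by_cases hwa : w = a
      · exact Or.inl hwa
      · have := dist_lt_of_mem_support pa hpa hw hwa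
        right; right; omega
  obtain ⟨q, hqpath, hqsup, hqchord⟩ := exists_chordless_path pred (pb.reverse.append pa) h0
  -- basic facts about supports
  have hqlow : ∀ w ∈ q.support, G.dist r w ≤ i - 1 := by
    intro w hw
    rcases hqsup w hw with rfl | rfl | h
    · omega
    · omega
    · omega
  have hxq : x ∉ q.support := fun h => by have := hqlow x h; omega
  have hyq : y ∉ q.support := fun h => by have := hqlow y h; omega
  have hzq : z ∉ q.support := fun h => by have := hqlow z h; omega
  have hxz : G.Adj x z := hzx.symm
  have hyb : G.Adj y b := hb1
  have hax : G.Adj a x := ha1.symm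
  set c : G.Walk x x :=
    Walk.cons hxz (Walk.cons hzy (Walk.cons hyb (q.append (Walk.cons hax Walk.nil)))) with hc
  have csupp : c.support = x :: z :: y :: (q.support ++ [x]) := by
    simp [hc, Walk.support_append]
  have cedges : c.edges = s(x, z) :: s(z, y) :: s(y, b) :: (q.edges ++ [s(a, x)]) := by
    simp [hc, Walk.edges_append]
  have hmem : ∀ w ∈ c.support, w = x ∨ w = z ∨ w = y ∨ w ∈ q.support := by
    intro w hw
    rw [csupp] at hw
    simp only [List.mem_cons, List.mem_append, List.mem_singleton] at hw
    tauto
  have hqedge_sub : ∀ e ∈ q.edges, e ∈ c.edges := by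
    intro e he
    rw [cedges]
    simp only [List.mem_cons, List.mem_append, List.mem_singleton]
    tauto
  have adne : ∀ {u v : V}, G.Adj u v → G.dist r u ≠ G.dist r v :=
    fun h => adj_dist_ne hconn f hf h
  have adle : ∀ {u v : V}, G.Adj u v → G.dist r v ≤ G.dist r u + 1 :=
    fun h => adj_dist_le hconn h
  -- c is a cycle
  have hcyc : c.IsCycle := by
    rw [hc, Walk.cons_isCycle_iff]
    constructor
    · rw [Walk.isPath_def]
      have : (Walk.cons hzy (Walk.cons hyb (q.append (Walk.cons hax Walk.nil)))).support
          = z :: y :: (q.support ++ [x]) := by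
        simp [Walk.support_append]
      rw [this]
      refine List.Nodup.cons ?_ (List.Nodup.cons ?_ ?_)
      · simp only [List.mem_cons, List.mem_append, List.mem_singleton]
        rintro (rfl | h | rfl | h)
        · exact (G.loopless.irrefl z) hzy
        · exact hzq h
        · have := adne hzx; omega
        · simp at h
      · simp only [List.mem_cons, List.mem_append, List.mem_singleton]
        rintro (h | rfl | h)
        · exact hyq h
        · exact hxyne rfl
        · simp at h
      · rw [List.nodup_append]
        refine ⟨(Walk.isPath_def q).mp hqpath, List.nodup_singleton x, ?_⟩
        intro w hw w' hw'
        rw [List.mem_singleton] at hw'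
        subst hw'
        exact fun h => hxq (h ▸ hw)
    · intro hmem'
      have redges : (Walk.cons hzy (Walk.cons hyb (q.append (Walk.cons hax Walk.nil)))).edges
          = s(z, y) :: s(y, b) :: (q.edges ++ [s(a, x)]) := by
        simp [Walk.edges_append]
      rw [redges] at hmem'
      simp only [List.mem_cons, List.mem_append, List.mem_singleton] at hmem'
      rcases hmem' with h | h | h | h | h
      · rw [Sym2.eq_iff] at h
        rcases h with h | h
        · rw [h.1] at hx; omega
        · exact hxyne h.1
      · rw [Sym2.eq_iff] at h
        rcases h with h | h
        · exact hxyne h.1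
        · rw [h.1] at hx; omega
      · exact hxq (Walk.fst_mem_support_of_mem_edges q h)
      · rw [Sym2.eq_iff] at h
        rcases h with h | h
        · rw [h.1] at hx; omega
        · rw [h.2] at hz; omega
      · simp at h
  -- c has no chords
  have hchord : ∀ u ∈ c.support, ∀ v ∈ c.support, G.Adj u v → s(u, v) ∈ c.edges := by
    have emem : ∀ e, e = s(x,z) ∨ e = s(z,y) ∨ e = s(y,b) ∨ e ∈ q.edges ∨ e = s(a,x) →
        e ∈ c.edges := by
      intro e he
      rw [cedges]
      simp only [List.mem_cons, List.mem_append, List.mem_singleton]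
      tauto
    intro u hu v hv huv
    rcases hmem u hu with rfl | rfl | rfl | hu' <;> rcases hmem v hv with rfl | rfl | rfl | hv'
    · exact absurd huv (G.loopless.irrefl _)
    · exact emem _ (Or.inl rfl)
    · have := adne huv; omega
    · -- u = x, v in q
      rcases hqsup v hv' with rfl | rfl | hlo
      · exact emem _ (Or.inr (Or.inr (Or.inr (Or.inr Sym2.eq_swap))))
      · exact absurd huv hbx
      · have := adle huv.symm; omega
    · exact emem _ (Or.inl Sym2.eq_swap)
    · exact absurd huv (G.loopless.irrefl _)
    · exact emem _ (Or.inr (Or.inl rfl))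
    · have := hqlow v hv'
      have := adle huv.symm; omega
    · have := adne huv; omega
    · exact emem _ (Or.inr (Or.inl Sym2.eq_swap))
    · exact absurd huv (G.loopless.irrefl _)
    · rcases hqsup v hv' with rfl | rfl | hlo
      · exact absurd huv hay
      · exact emem _ (Or.inr (Or.inr (Or.inl rfl)))
      · have := adle huv.symm; omega
    · -- u in q, v = x
      rcases hqsup u hu' with rfl | rfl | hlo
      · exact emem _ (Or.inr (Or.inr (Or.inr (Or.inr rfl))))
      · exact absurd huv.symm hbx
      · have := adle huv; omega
    · have := hqlow u hu'
      have := adle huv; omega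
    · rcases hqsup u hu' with rfl | rfl | hlo
      · exact absurd huv.symm hay
      · exact emem _ (Or.inr (Or.inr (Or.inl Sym2.eq_swap)))
      · have := adle huv; omega
    · exact hqedge_sub _ (hqchord u v hu' hv' huv)
  have h4 := hcb x c ⟨hcyc, hchord⟩
  have hclen : c.length = q.length + 4 := by
    simp [hc, Walk.length_append]
  have hq0 : q.length = 0 := by omega
  have : b = a := Walk.eq_of_length_eq_zero hq0
  exact hay (this ▸ hb1)
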